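/- Let V be the Volterra operator on S with a_{ki} = −1 for all i > k. If x ∈ S has infinite support (infinitely many nonzero coordinates), then Vⁿ(x) converges pointwise to the zero sequence; in particular the trajectory has no ℓ¹-norm limit point in S. -/

import Mathlib

open Filter Topology

theorem stmt_13 (V : (ℕ → ℝ) → (ℕ → ℝ))
    (hV : ∀ x k, V x k = x k ^ 2 + 2 * x k * ∑ i ∈ Finset.range k, x i)
    (x : ℕ → ℝ) (hx : (∀ k, 0 ≤ x k) ∧ Summable x ∧ ∑' k, x k = 1)
    (hsupp : {i | x i ≠ 0}.Infinite) :
    (∀ k, Tendsto (fun n => (V^[n] x) k) atTop (𝓝 0)) ∧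
    ¬∃ (a : ℕ → ℝ) (φ : ℕ → ℕ), StrictMono φ ∧
        ((∀ k, 0 ≤ a k) ∧ Summable a ∧ ∑' k, a k = 1) ∧
        Tendsto (fun n => ∑' k, |(V^[φ n] x) k - a k|) atTop (𝓝 0) := by
  obtain ⟨hpos, hsum, htot⟩ := hx
  have hVsum : ∀ (y : ℕ → ℝ) (k : ℕ),
      ∑ i ∈ Finset.range k, V y i = (∑ i ∈ Finset.range k, y i) ^ 2 := by
    intro y k
    induction k with
    | zero => simp
    | succ k ih =>
      rw [Finset.sum_range_succ, ih, hV, Finset.sum_range_succ]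
      ring
  have hP : ∀ n k, ∑ i ∈ Finset.range k, (V^[n] x) i
      = (∑ i ∈ Finset.range k, x i) ^ (2 ^ n) := by
    intro n
    induction n with
    | zero => simp
    | succ n ih =>
      intro k
      rw [Function.iterate_succ_apply', hVsum, ih, ← pow_mul, pow_succ]
  have hps0 : ∀ k, (0:ℝ) ≤ ∑ i ∈ Finset.range k, x i :=
    fun k => Finset.sum_nonneg fun i _ => hpos i
  have hps_lt : ∀ k, ∑ i ∈ Finset.range k, x i < 1 := by
    intro k
    obtain ⟨j, hj, hjk⟩ := hsupp.exists_gt k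
    have hjnot : j ∉ Finset.range k := by
      simp only [Finset.mem_range]; omega
    have hle : ∑ i ∈ insert j (Finset.range k), x i ≤ ∑' i, x i :=
      Summable.sum_le_tsum _ (fun i _ => hpos i) hsum
    rw [Finset.sum_insert hjnot, htot] at hle
    have hxj : 0 < x j := lt_of_le_of_ne (hpos j) (Ne.symm hj)
    linarith
  have h2pow : Tendsto (fun n : ℕ => (2:ℕ) ^ n) atTop atTop :=
    tendsto_pow_atTop_atTop_of_one_lt (by norm_num)
  have hcpow : ∀ k, Tendsto (fun n : ℕ => (∑ i ∈ Finset.range k, x i) ^ (2 ^ n))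
      atTop (𝓝 0) := by
    intro k
    exact (tendsto_pow_atTop_nhds_zero_of_lt_one (hps0 k) (hps_lt k)).comp h2pow
  have hcoord : ∀ k, Tendsto (fun n => (V^[n] x) k) atTop (𝓝 0) := by
    intro k
    have heq : ∀ n, (V^[n] x) k
        = (∑ i ∈ Finset.range (k+1), x i) ^ (2 ^ n)
          - (∑ i ∈ Finset.range k, x i) ^ (2 ^ n) := by
      intro n
      have := hP n (k+1)
      rw [Finset.sum_range_succ] at this
      have h2 := hP n k
      linarith
    simp only [heq]
    have := (hcpow (k+1)).sub (hcpow k)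
    simpa using this
  refine ⟨hcoord, ?_⟩
  rintro ⟨a, φ, hφ, ⟨ha0, hasum, hat⟩, hconv⟩
  -- nonnegativity and summability of iterates
  have hposn : ∀ n k, 0 ≤ (V^[n] x) k := by
    intro n
    induction n with
    | zero => exact hpos
    | succ n ih =>
      intro k
      rw [Function.iterate_succ_apply', hV]
      have h1 : 0 ≤ ∑ i ∈ Finset.range k, (V^[n] x) i :=
        Finset.sum_nonneg fun i _ => ih i
      have h2 := ih k
      nlinarith
  have hsummn : ∀ n, Summable (V^[n] x) := by
    intro n
    apply summable_of_sum_range_le (hposn n)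
    intro k
    rw [hP]
    exact pow_le_one₀ (hps0 k) (hps_lt k).le
  have hak : ∀ k, a k = 0 := by
    intro k
    have h1 : Tendsto (fun n => (V^[φ n] x) k) atTop (𝓝 0) :=
      (hcoord k).comp hφ.tendsto_atTop
    have h2 : Tendsto (fun n => (V^[φ n] x) k - a k) atTop (𝓝 0) := by
      apply squeeze_zero_norm _ hconv
      intro n
      have hS : Summable fun j => |(V^[φ n] x) j - a j| :=
        ((hsummn (φ n)).sub hasum).abs
      have := Summable.le_tsum hS k (fun j _ => abs_nonneg _)
      simpa [Real.norm_eq_abs] using this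
    have h3 : Tendsto (fun n => (V^[φ n] x) k) atTop (𝓝 (a k)) := by
      have := h2.add_const (a k)
      simpa using this
    exact (tendsto_nhds_unique h3 h1)
  have : (1:ℝ) = 0 := by
    rw [← hat]
    simp [hak]
  norm_num at this
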